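/- Let p, q, μ > 0 and let H + M act on pairs of one-variable polynomials by (H+M)(f,g) = (f'' - (y/2)f' + (q/p) g, μ g'' - (y/2) g' + (p/q) f). Then for every n ∈ ℕ, the pair (f̃_n, g̃_n) with leading terms (q y^n, -p y^n) defined by f̃_n = q(h_n + ((n(n-1)(1-μ))/3) h_{n-2} + lower order), g̃_n = -p(ĥ_n - ((n(n-1)(1-μ))/3) ĥ_{n-2} + lower order) can be chosen so that (H+M)(f̃_n, g̃_n) = -(1 + n/2)(f̃_n, g̃_n); in particular for n = 0 the pair (q, -p) satisfies (H+M)(q,-p) = -(q,-p). -/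

import Mathlib

open Polynomial


noncomputable def revc (p q μ : ℝ) (n : ℕ) : ℕ → ℝ × ℝ
  | 0 => (q, -p)
  | 1 => (0, 0)
  | j + 2 =>
    let prev := revc p q μ n j
    let d : ℝ := -((j : ℝ) + 4) / 2
    let det : ℝ := d ^ 2 - 1
    let R1 : ℝ := ((n : ℝ) - j) * ((n : ℝ) - j - 1) * prev.1
    let R2 : ℝ := μ * ((n : ℝ) - j) * ((n : ℝ) - j - 1) * prev.2
    ((d * R1 + (q / p) * R2) / det, (d * R2 + (p / q) * R1) / det)

lemma abstract_spec (p q d R1 R2 : ℝ) (hp : p ≠ 0) (hq : q ≠ 0) (hdet : d ^ 2 - 1 ≠ 0) :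
    d * ((d * R1 + (q / p) * R2) / (d ^ 2 - 1)) - (q / p) * ((d * R2 + (p / q) * R1) / (d ^ 2 - 1)) = R1
    ∧ d * ((d * R2 + (p / q) * R1) / (d ^ 2 - 1)) - (p / q) * ((d * R1 + (q / p) * R2) / (d ^ 2 - 1)) = R2 := by
  constructor <;> (field_simp; ring)

lemma revc_det (j : ℕ) : (-((j:ℝ)+4)/2)^2 - 1 ≠ 0 := by
  have h : (0:ℝ) ≤ (j:ℝ) := Nat.cast_nonneg j
  nlinarith

lemma revc_spec1 (p q μ : ℝ) (hp : p ≠ 0) (hq : q ≠ 0) (n j : ℕ) :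
    (-((j : ℝ) + 4) / 2) * (revc p q μ n (j+2)).1 - (q/p) * (revc p q μ n (j+2)).2
      = ((n:ℝ)-j)*((n:ℝ)-j-1) * (revc p q μ n j).1 := by
  simp only [revc]
  exact (abstract_spec p q (-((j : ℝ) + 4) / 2) _ _ hp hq (revc_det j)).1

lemma revc_spec2 (p q μ : ℝ) (hp : p ≠ 0) (hq : q ≠ 0) (n j : ℕ) :
    (-((j : ℝ) + 4) / 2) * (revc p q μ n (j+2)).2 - (p/q) * (revc p q μ n (j+2)).1
      = μ * (((n:ℝ)-j)*((n:ℝ)-j-1)) * (revc p q μ n j).2 := by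
  simp only [revc]
  have := (abstract_spec p q (-((j : ℝ) + 4) / 2) (((n:ℝ)-j)*((n:ℝ)-j-1) * (revc p q μ n j).1)
    (μ * (((n:ℝ)-j)*((n:ℝ)-j-1)) * (revc p q μ n j).2) hp hq (revc_det j)).2
  rw [← this]; ring_nf

noncomputable def Fc (p q μ : ℝ) (n m : ℕ) : ℝ :=
  if m ≤ n then (revc p q μ n (n - m)).1 else 0

noncomputable def Gc (p q μ : ℝ) (n m : ℕ) : ℝ :=
  if m ≤ n then (revc p q μ n (n - m)).2 else 0

lemma eqF (p q μ : ℝ) (hp : p ≠ 0) (hq : q ≠ 0) (n m : ℕ) :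
    ((m:ℝ)+2)*((m:ℝ)+1) * Fc p q μ n (m+2) + (q/p) * Gc p q μ n m
      = (-(1+(n:ℝ)/2) + (m:ℝ)/2) * Fc p q μ n m := by
  rcases lt_or_ge n m with h | h
  · have h2 : ¬ m ≤ n := not_le.2 h
    have h3 : ¬ m + 2 ≤ n := by omega
    simp [Fc, Gc, h2, h3]
  by_cases h1 : m = n
  · subst h1
    have h3 : ¬ m + 2 ≤ m := by omega
    simp only [Fc, Gc, if_pos le_rfl, if_neg h3, Nat.sub_self, revc]
    field_simp
    ring
  by_cases h2 : m + 1 = n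
  · have h3 : ¬ m + 2 ≤ n := by omega
    have h4 : n - m = 1 := by omega
    simp [Fc, Gc, h, h3, h4, revc]
  · have h3 : m + 2 ≤ n := by omega
    set j := n - m - 2 with hj
    have hnm : n - m = j + 2 := by omega
    have hnm2 : n - (m+2) = j := by omega
    have hsum : j + m + 2 = n := by omega
    have hjr : (j:ℝ) = (n:ℝ) - m - 2 := by
      have := congrArg (Nat.cast : ℕ → ℝ) hsum
      push_cast at this; linarith
    have spec := revc_spec1 p q μ hp hq n j
    rw [hjr] at spec
    rw [show Fc p q μ n (m+2) = (revc p q μ n j).1 from by rw [Fc, if_pos h3, hnm2],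
        show Fc p q μ n m = (revc p q μ n (j+2)).1 from by rw [Fc, if_pos h, hnm],
        show Gc p q μ n m = (revc p q μ n (j+2)).2 from by rw [Gc, if_pos h, hnm]]
    linear_combination -spec

lemma eqG (p q μ : ℝ) (hp : p ≠ 0) (hq : q ≠ 0) (n m : ℕ) :
    μ * (((m:ℝ)+2)*((m:ℝ)+1)) * Gc p q μ n (m+2) + (p/q) * Fc p q μ n m
      = (-(1+(n:ℝ)/2) + (m:ℝ)/2) * Gc p q μ n m := by
  rcases lt_or_ge n m with h | h
  · have h2 : ¬ m ≤ n := not_le.2 h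
    have h3 : ¬ m + 2 ≤ n := by omega
    simp [Fc, Gc, h2, h3]
  by_cases h1 : m = n
  · subst h1
    have h3 : ¬ m + 2 ≤ m := by omega
    simp only [Fc, Gc, if_pos le_rfl, if_neg h3, Nat.sub_self, revc]
    field_simp
    ring
  by_cases h2 : m + 1 = n
  · have h3 : ¬ m + 2 ≤ n := by omega
    have h4 : n - m = 1 := by omega
    simp [Fc, Gc, h, h3, h4, revc]
  · have h3 : m + 2 ≤ n := by omega
    set j := n - m - 2 with hj
    have hnm : n - m = j + 2 := by omega
    have hnm2 : n - (m+2) = j := by omega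
    have hsum : j + m + 2 = n := by omega
    have hjr : (j:ℝ) = (n:ℝ) - m - 2 := by
      have := congrArg (Nat.cast : ℕ → ℝ) hsum
      push_cast at this; linarith
    have spec := revc_spec2 p q μ hp hq n j
    rw [hjr] at spec
    rw [show Gc p q μ n (m+2) = (revc p q μ n j).2 from by rw [Gc, if_pos h3, hnm2],
        show Gc p q μ n m = (revc p q μ n (j+2)).2 from by rw [Gc, if_pos h, hnm],
        show Fc p q μ n m = (revc p q μ n (j+2)).1 from by rw [Fc, if_pos h, hnm]]
    linear_combination -spec

noncomputable def Fpoly (p q μ : ℝ) (n : ℕ) : Polynomial ℝ :=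
  ∑ k ∈ Finset.range (n + 1), C (Fc p q μ n k) * X ^ k

noncomputable def Gpoly (p q μ : ℝ) (n : ℕ) : Polynomial ℝ :=
  ∑ k ∈ Finset.range (n + 1), C (Gc p q μ n k) * X ^ k

lemma Fpoly_coeff (p q μ : ℝ) (n m : ℕ) : (Fpoly p q μ n).coeff m = Fc p q μ n m := by
  rw [Fpoly, finset_sum_coeff]
  by_cases h : m ≤ n
  · rw [Finset.sum_eq_single m]
    · simp
    · intro b _ hb; simp [coeff_X_pow, hb, Ne.symm hb]
    · intro hm; exact absurd (Finset.mem_range.2 (Nat.lt_succ_of_le h)) hm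
  · rw [Finset.sum_eq_zero, Fc, if_neg h]
    intro b hb
    have hb' : b ≠ m := by
      rintro rfl; exact h (Nat.lt_succ_iff.1 (Finset.mem_range.1 hb))
    simp [coeff_X_pow, Ne.symm hb']

lemma Gpoly_coeff (p q μ : ℝ) (n m : ℕ) : (Gpoly p q μ n).coeff m = Gc p q μ n m := by
  rw [Gpoly, finset_sum_coeff]
  by_cases h : m ≤ n
  · rw [Finset.sum_eq_single m]
    · simp
    · intro b _ hb; simp [coeff_X_pow, hb, Ne.symm hb]
    · intro hm; exact absurd (Finset.mem_range.2 (Nat.lt_succ_of_le h)) hm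
  · rw [Finset.sum_eq_zero, Gc, if_neg h]
    intro b hb
    have hb' : b ≠ m := by
      rintro rfl; exact h (Nat.lt_succ_iff.1 (Finset.mem_range.1 hb))
    simp [coeff_X_pow, Ne.symm hb']

lemma Fc_top (p q μ : ℝ) (n : ℕ) : Fc p q μ n n = q := by simp [Fc, revc]
lemma Gc_top (p q μ : ℝ) (n : ℕ) : Gc p q μ n n = -p := by simp [Gc, revc]

lemma Fpoly_natDegree (p q μ : ℝ) (hq : q ≠ 0) (n : ℕ) : (Fpoly p q μ n).natDegree = n := by
  apply le_antisymm
  · rw [natDegree_le_iff_coeff_eq_zero]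
    intro m hm
    rw [Fpoly_coeff, Fc, if_neg (not_le.2 hm)]
  · apply le_natDegree_of_ne_zero
    rw [Fpoly_coeff, Fc_top]; exact hq

lemma Gpoly_natDegree (p q μ : ℝ) (hp : p ≠ 0) (n : ℕ) : (Gpoly p q μ n).natDegree = n := by
  apply le_antisymm
  · rw [natDegree_le_iff_coeff_eq_zero]
    intro m hm
    rw [Gpoly_coeff, Gc, if_neg (not_le.2 hm)]
  · apply le_natDegree_of_ne_zero
    rw [Gpoly_coeff, Gc_top]; simpa using hp

/-- For every `n` there is a pair of degree-`n` polynomials `(f̃_n, g̃_n)` with leading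
terms `(q y^n, -p y^n)` which is an eigenvector of
`(H+M)(f,g) = (f'' - (y/2)f' + (q/p)g, μ g'' - (y/2)g' + (p/q)f)` with eigenvalue
`-(1 + n/2)`; in particular, for `n = 0` the constant pair `(q, -p)` satisfies
`(H+M)(q, -p) = -(q, -p)`. -/
theorem HM_negative_eigenpairs (p q μ : ℝ) (hp : 0 < p) (hq : 0 < q) (hμ : 0 < μ) :
    (∀ n : ℕ, ∃ F G : Polynomial ℝ,
      F.natDegree = n ∧ F.coeff n = q ∧ G.natDegree = n ∧ G.coeff n = -p ∧
      derivative (derivative F) - C (1 / 2 : ℝ) * X * derivative F + C (q / p) * G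
        = C (-(1 + (n : ℝ) / 2)) * F ∧
      C μ * derivative (derivative G) - C (1 / 2 : ℝ) * X * derivative G + C (p / q) * F
        = C (-(1 + (n : ℝ) / 2)) * G) ∧
    ((q / p) * (-p) = -(1 : ℝ) * q ∧ (p / q) * q = -(1 : ℝ) * (-p)) := by
  have hp' := hp.ne'
  have hq' := hq.ne'
  refine ⟨fun n => ⟨Fpoly p q μ n, Gpoly p q μ n, Fpoly_natDegree p q μ hq' n,
    by rw [Fpoly_coeff, Fc_top], Gpoly_natDegree p q μ hp' n,
    by rw [Gpoly_coeff, Gc_top], ?_, ?_⟩, by field_simp, by field_simp⟩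
  · rw [mul_assoc]
    ext m
    rcases m with _ | m
    · simp only [coeff_add, coeff_sub, coeff_C_mul, coeff_derivative, mul_coeff_zero,
        coeff_X_zero, coeff_C_zero, Fpoly_coeff, Gpoly_coeff, zero_mul, mul_zero]
      have := eqF p q μ hp' hq' n 0
      push_cast at this ⊢
      linear_combination this
    · simp only [coeff_add, coeff_sub, coeff_C_mul, coeff_derivative, coeff_X_mul,
        Fpoly_coeff, Gpoly_coeff]
      have := eqF p q μ hp' hq' n (m + 1)
      push_cast at this ⊢
      linear_combination this
  · rw [mul_assoc]
    ext m
    rcases m with _ | m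
    · simp only [coeff_add, coeff_sub, coeff_C_mul, coeff_derivative, mul_coeff_zero,
        coeff_X_zero, coeff_C_zero, Fpoly_coeff, Gpoly_coeff, zero_mul, mul_zero]
      have := eqG p q μ hp' hq' n 0
      push_cast at this ⊢
      linear_combination this
    · simp only [coeff_add, coeff_sub, coeff_C_mul, coeff_derivative, coeff_X_mul,
        Fpoly_coeff, Gpoly_coeff]
      have := eqG p q μ hp' hq' n (m + 1)
      push_cast at this ⊢
      linear_combination this
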